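/- Let L be a finite modular lattice of height n and let M be a distributive sublattice of L. Then the number of atoms of M (atoms of M as a lattice in its own right) is at most n. Moreover, the number of atoms of M equals n if and only if every atom of M is also an atom of L and the greatest element of L is the join of the atoms of M. -/
import Mathlib


/-- The set of atoms of a sublattice `M` (as a lattice in its own right) having
least element `m₀`: elements of `M` covering `m₀` within `M`. -/
def atomsOfSublattice {α : Type*} [Preorder α] (M : Set α) (m₀ : α) : Set α :=
  {a | a ∈ M ∧ m₀ < a ∧ ∀ b ∈ M, m₀ < b → ¬ b < a}

open Order
set_option linter.unusedSectionVars false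
section helpers
variable {α : Type*} [Lattice α] [Fintype α] [BoundedOrder α] [IsModularLattice α]

lemma my_height_lt_top (x : α) : Order.height x < ⊤ := by
  have h : Order.height x ≤ (Fintype.card α : ℕ∞) := by
    apply Order.height_le
    intro p _
    have : p.length + 1 ≤ Fintype.card α := by
      simpa using Fintype.card_le_of_injective p.toFun p.strictMono.injective
    exact_mod_cast Nat.le_of_succ_le this
  exact lt_of_le_of_lt h (by simp [lt_top_iff_ne_top])

lemma interval_two {a x z : α} (ha : IsAtom a) (hxz : x ≤ z) (hz : z ≤ x ⊔ a) :
    z = x ∨ z = x ⊔ a := by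
  rcases ha.le_iff.mp (inf_le_left : a ⊓ z ≤ a) with h | h
  · left
    have h2 : (x ⊔ a) ⊓ z = x ⊔ a ⊓ z := sup_inf_assoc_of_le a hxz
    rw [inf_eq_right.mpr hz, h, sup_bot_eq] at h2
    exact h2
  · right
    have haz : a ≤ z := by rw [← h]; exact inf_le_right
    exact le_antisymm hz (sup_le hxz haz)

lemma height_le_height_inf_add_one {a x : α} (ha : IsAtom a) :
    ∀ z : α, z ≤ x ⊔ a → Order.height z ≤ Order.height (z ⊓ x) + 1 := by
  intro z
  induction z using WellFoundedLT.induction with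
  | _ z IH =>
    intro hz
    rw [Order.height_eq_iSup_lt_height z]
    apply iSup₂_le
    intro w hw
    have key : Order.height w ≤ Order.height (z ⊓ x) := by
      by_cases hwx : w ≤ x
      · exact Order.height_mono (le_inf hw.le hwx)
      · -- w ⊔ x = x ⊔ a, and z ⊔ x = w ⊔ x
        have hwxa : w ⊔ x = x ⊔ a := by
          rcases interval_two ha (le_sup_right : x ≤ w ⊔ x)
            (sup_le (hw.le.trans hz) le_sup_left : w ⊔ x ≤ x ⊔ a) with h | h
          · exact absurd (sup_eq_right.mp h) hwx
          · exact h
        have hzxa : z ⊔ x = x ⊔ a := by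
          apply le_antisymm (sup_le hz le_sup_left)
          rw [← hwxa]; exact sup_le_sup_right hw.le x
        have hlt : w ⊓ x < z ⊓ x := by
          rcases lt_or_eq_of_le (inf_le_inf_right x hw.le) with h | h
          · exact h
          · exact absurd (eq_of_le_of_inf_le_of_sup_le hw.le h.ge (by rw [hzxa, hwxa])) hw.ne
        have h1 : Order.height w ≤ Order.height (w ⊓ x) + 1 := IH w hw (hw.le.trans hz)
        have h2 : Order.height (w ⊓ x) + 1 ≤ Order.height (z ⊓ x) :=
          ENat.add_one_le_iff (my_height_lt_top _).ne |>.mpr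
            (Order.height_strictMono hlt (my_height_lt_top _))
        exact h1.trans h2
    calc Order.height w + 1 ≤ Order.height (z ⊓ x) + 1 := by
          gcongr
    

lemma height_sup_atom_le {a : α} (ha : IsAtom a) (x : α) :
    Order.height (x ⊔ a) ≤ Order.height x + 1 := by
  have := height_le_height_inf_add_one ha (x ⊔ a) le_rfl
  rwa [inf_eq_right.mpr le_sup_left] at this

lemma height_finset_sup_atoms_le (T : Finset α) :
    (∀ a ∈ T, IsAtom a) → Order.height (T.sup id) ≤ (T.card : ℕ∞) := by
  classical
  induction T using Finset.induction_on with
  | empty => intro _; simp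
  | @insert a T haT IH =>
    intro h'
    rw [Finset.sup_insert]
    have h1 : Order.height (T.sup id ⊔ a) ≤ Order.height (T.sup id) + 1 :=
      height_sup_atom_le (h' a (Finset.mem_insert_self a T)) _
    rw [sup_comm] at h1
    calc Order.height (id a ⊔ T.sup id) ≤ Order.height (T.sup id) + 1 := h1
      _ ≤ (T.card : ℕ∞) + 1 := by
          gcongr
          exact IH fun b hb => h' b (Finset.mem_insert_of_mem hb)
      _ = ((insert a T).card : ℕ∞) := by
          rw [Finset.card_insert_of_notMem haT]; push_cast; ring

end helpers

section sub
variable {α : Type*} [Lattice α] [Fintype α] [BoundedOrder α] [IsModularLattice α]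
variable {M : Set α} {m₀ : α}
variable (hjoin : ∀ x ∈ M, ∀ y ∈ M, x ⊔ y ∈ M)
variable (hmeet : ∀ x ∈ M, ∀ y ∈ M, x ⊓ y ∈ M)
variable (hdist : ∀ x ∈ M, ∀ y ∈ M, ∀ z ∈ M, x ⊔ (y ⊓ z) = (x ⊔ y) ⊓ (x ⊔ z))
variable (hm₀ : IsLeast M m₀)
variable [DecidableEq α]

include hjoin hmeet hdist hm₀ in
lemma atoms_subset_M : atomsOfSublattice M m₀ ⊆ M := fun _ h => h.1

include hjoin hmeet hdist hm₀ in
lemma atom_inf_atom {a b : α} (ha : a ∈ atomsOfSublattice M m₀)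
    (hb : b ∈ atomsOfSublattice M m₀) (hab : a ≠ b) : a ⊓ b = m₀ := by
  obtain ⟨haM, ham, hamax⟩ := ha
  obtain ⟨hbM, hbm, hbmax⟩ := hb
  by_contra h
  have h1 : m₀ < a ⊓ b :=
    lt_of_le_of_ne (le_inf (hm₀.2 haM) (hm₀.2 hbM)) (Ne.symm h)
  have h2 : ¬ (a ⊓ b < a) := hamax _ (hmeet a haM b hbM) h1
  have h4 : a ⊓ b = a := ((inf_le_left : a ⊓ b ≤ a).lt_or_eq).resolve_left h2
  have h6 : a < b := (h4 ▸ (inf_le_right : a ⊓ b ≤ b)).lt_of_ne hab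
  exact hbmax a haM ham h6

include hjoin hmeet hdist hm₀ in
lemma inf_dist {x y z : α} (hx : x ∈ M) (hy : y ∈ M) (hz : z ∈ M) :
    x ⊓ (y ⊔ z) = (x ⊓ y) ⊔ (x ⊓ z) := by
  symm
  calc (x ⊓ y) ⊔ (x ⊓ z)
      = ((x ⊓ y) ⊔ x) ⊓ ((x ⊓ y) ⊔ z) := hdist _ (hmeet _ hx _ hy) _ hx _ hz
    _ = x ⊓ (z ⊔ (x ⊓ y)) := by rw [sup_eq_right.mpr inf_le_left, sup_comm]
    _ = x ⊓ ((z ⊔ x) ⊓ (z ⊔ y)) := by rw [hdist _ hz _ hx _ hy]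
    _ = (x ⊓ (z ⊔ x)) ⊓ (z ⊔ y) := by rw [inf_assoc]
    _ = x ⊓ (y ⊔ z) := by rw [inf_eq_left.mpr (le_sup_right : x ≤ z ⊔ x), sup_comm z y]

include hjoin hmeet hdist hm₀ in
lemma jset_mem (T : Finset α) : ↑T ⊆ M → m₀ ⊔ T.sup id ∈ M := by
  classical
  induction T using Finset.induction_on with
  | empty => intro _; simpa using hm₀.1
  | @insert a T haT IH =>
    intro hT
    have haM : a ∈ M := hT (Finset.mem_insert_self a T)
    have hTM : ↑T ⊆ M := fun x hx => hT (Finset.mem_insert_of_mem hx)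
    rw [Finset.sup_insert, show m₀ ⊔ (id a ⊔ T.sup id) = a ⊔ (m₀ ⊔ T.sup id) by
      rw [← sup_assoc, sup_comm m₀ (id a), sup_assoc]; rfl]
    exact hjoin a haM _ (IH hTM)

include hjoin hmeet hdist hm₀ in
lemma atom_inf_jset {a : α} (ha : a ∈ atomsOfSublattice M m₀) (T : Finset α) :
    ↑T ⊆ atomsOfSublattice M m₀ → a ∉ T → a ⊓ (m₀ ⊔ T.sup id) = m₀ := by
  classical
  induction T using Finset.induction_on with
  | empty => intro _ _; simpa using inf_eq_right.mpr (hm₀.2 ha.1)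
  | @insert t T htT IH =>
    intro hT haT
    have htA : t ∈ atomsOfSublattice M m₀ := hT (Finset.mem_insert_self t T)
    have hTA : ↑T ⊆ atomsOfSublattice M m₀ := fun x hx => hT (Finset.mem_insert_of_mem hx)
    have hTM : ↑T ⊆ M := fun x hx => (hTA hx).1
    have hat : a ≠ t := fun h => haT (h ▸ Finset.mem_insert_self t T)
    rw [Finset.sup_insert, show m₀ ⊔ (id t ⊔ T.sup id) = t ⊔ (m₀ ⊔ T.sup id) by
      rw [← sup_assoc, sup_comm m₀ (id t), sup_assoc]; rfl]
    rw [inf_dist hjoin hmeet hdist hm₀ ha.1 htA.1 (jset_mem hjoin hmeet hdist hm₀ T hTM)]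
    rw [atom_inf_atom hjoin hmeet hdist hm₀ ha htA hat,
      IH hTA (fun h => haT (Finset.mem_insert_of_mem h)), sup_idem]

include hjoin hmeet hdist hm₀ in
lemma atom_not_le_jset {a : α} (ha : a ∈ atomsOfSublattice M m₀) (T : Finset α)
    (hT : ↑T ⊆ atomsOfSublattice M m₀) (haT : a ∉ T) : ¬ a ≤ m₀ ⊔ T.sup id := by
  intro h
  have := atom_inf_jset hjoin hmeet hdist hm₀ ha T hT haT
  rw [inf_eq_left.mpr h] at this
  exact ha.2.1.ne' this

include hjoin hmeet hdist hm₀ in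
lemma height_jset_ge (T : Finset α) :
    ↑T ⊆ atomsOfSublattice M m₀ →
      Order.height m₀ + (T.card : ℕ∞) ≤ Order.height (m₀ ⊔ T.sup id) := by
  classical
  induction T using Finset.induction_on with
  | empty => intro _; simp
  | @insert a T haT IH =>
    intro hT
    have haA : a ∈ atomsOfSublattice M m₀ := hT (Finset.mem_insert_self a T)
    have hTA : ↑T ⊆ atomsOfSublattice M m₀ := fun x hx => hT (Finset.mem_insert_of_mem hx)
    rw [Finset.sup_insert, show m₀ ⊔ (id a ⊔ T.sup id) = a ⊔ (m₀ ⊔ T.sup id) by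
      rw [← sup_assoc, sup_comm m₀ (id a), sup_assoc]; rfl]
    have hlt : m₀ ⊔ T.sup id < a ⊔ (m₀ ⊔ T.sup id) := by
      refine lt_of_le_of_ne le_sup_right (fun h => ?_)
      exact atom_not_le_jset hjoin hmeet hdist hm₀ haA T hTA haT (h ▸ le_sup_left)
    have h2 : Order.height (m₀ ⊔ T.sup id) + 1 ≤ Order.height (a ⊔ (m₀ ⊔ T.sup id)) :=
      (ENat.add_one_le_iff (my_height_lt_top _).ne).mpr
        (Order.height_strictMono hlt (my_height_lt_top _))
    calc Order.height m₀ + ((insert a T).card : ℕ∞)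
        = (Order.height m₀ + T.card) + 1 := by
          rw [Finset.card_insert_of_notMem haT]; push_cast; ring
      _ ≤ Order.height (m₀ ⊔ T.sup id) + 1 := by gcongr; exact IH hTA
      _ ≤ _ := h2

include hjoin hmeet hdist hm₀ in
lemma height_jset_ge' {a : α} (ha : a ∈ atomsOfSublattice M m₀) (T : Finset α) :
    ↑T ⊆ atomsOfSublattice M m₀ → a ∉ T →
      Order.height a + (T.card : ℕ∞) ≤ Order.height (m₀ ⊔ (insert a T).sup id) := by
  classical
  induction T using Finset.induction_on with
  | empty =>
    intro _ _
    simpa using le_of_eq (congrArg Order.height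
      (by simpa using (sup_eq_right.mpr (hm₀.2 ha.1) : m₀ ⊔ a = a).symm))
  | @insert t T htT IH =>
    intro hT haT
    have htA : t ∈ atomsOfSublattice M m₀ := hT (Finset.mem_insert_self t T)
    have hTA : ↑T ⊆ atomsOfSublattice M m₀ := fun x hx => hT (Finset.mem_insert_of_mem hx)
    have hat : a ≠ t := fun h => haT (h ▸ Finset.mem_insert_self t T)
    have haT' : a ∉ T := fun h => haT (Finset.mem_insert_of_mem h)
    have htaT : t ∉ insert a T := by
      simp only [Finset.mem_insert]
      push_neg
      exact ⟨fun h => hat h.symm, htT⟩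
    have hsub : ↑(insert a T) ⊆ atomsOfSublattice M m₀ := by
      intro x hx
      rcases Finset.mem_insert.mp hx with h | h
      · exact h ▸ ha
      · exact hTA h
    rw [Finset.insert_comm, Finset.sup_insert,
      show m₀ ⊔ (id t ⊔ (insert a T).sup id) = t ⊔ (m₀ ⊔ (insert a T).sup id) by
        rw [← sup_assoc, sup_comm m₀ (id t), sup_assoc]; rfl]
    have hlt : m₀ ⊔ (insert a T).sup id < t ⊔ (m₀ ⊔ (insert a T).sup id) := by
      refine lt_of_le_of_ne le_sup_right (fun h => ?_)
      exact atom_not_le_jset hjoin hmeet hdist hm₀ htA _ hsub htaT (h ▸ le_sup_left)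
    have h2 : Order.height (m₀ ⊔ (insert a T).sup id) + 1 ≤
        Order.height (t ⊔ (m₀ ⊔ (insert a T).sup id)) :=
      (ENat.add_one_le_iff (my_height_lt_top _).ne).mpr
        (Order.height_strictMono hlt (my_height_lt_top _))
    calc Order.height a + ((insert t T).card : ℕ∞)
        = (Order.height a + T.card) + 1 := by
          rw [Finset.card_insert_of_notMem htT]; push_cast; ring
      _ ≤ Order.height (m₀ ⊔ (insert a T).sup id) + 1 := by gcongr; exact IH hTA haT'
      _ ≤ _ := h2

end sub

/-- Let `L` be a finite modular lattice of height `n` and `M` a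
distributive sublattice of `L` with least element `m₀`.  Then the number of atoms of
`M` is at most `n`; moreover it equals `n` iff every atom of `M` is an atom of `L`
and the greatest element of `L` is the join (least upper bound) of the atoms of `M`. -/
theorem card_atoms_distrib_sublattice_of_modular
    {α : Type*} [Lattice α] [Fintype α] [BoundedOrder α] [IsModularLattice α]
    (n : ℕ) (hht : Order.height (⊤ : α) = n)
    (M : Set α)
    (hjoin : ∀ x ∈ M, ∀ y ∈ M, x ⊔ y ∈ M)
    (hmeet : ∀ x ∈ M, ∀ y ∈ M, x ⊓ y ∈ M)
    (hdist : ∀ x ∈ M, ∀ y ∈ M, ∀ z ∈ M, x ⊔ (y ⊓ z) = (x ⊔ y) ⊓ (x ⊔ z))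
    (m₀ : α) (hm₀ : IsLeast M m₀) :
    (atomsOfSublattice M m₀).ncard ≤ n ∧
      ((atomsOfSublattice M m₀).ncard = n ↔
        (∀ a ∈ atomsOfSublattice M m₀, IsAtom a) ∧
          IsLUB (atomsOfSublattice M m₀) ⊤) := by
  classical
  set A := atomsOfSublattice M m₀ with hA
  have hAfin : A.Finite := Set.toFinite A
  set T := hAfin.toFinset with hTdef
  have hTA : ↑T ⊆ A := by rw [hTdef, Set.Finite.coe_toFinset]
  have hcard : A.ncard = T.card := Set.ncard_eq_toFinset_card _ _
  have hM4 := height_jset_ge hjoin hmeet hdist hm₀ T hTA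
  have hjle : Order.height (m₀ ⊔ T.sup id) ≤ (n : ℕ∞) :=
    hht ▸ Order.height_mono le_top
  have hkn : (T.card : ℕ∞) ≤ (n : ℕ∞) := le_trans (le_trans le_add_self hM4) hjle
  have h1 : A.ncard ≤ n := by rw [hcard]; exact_mod_cast hkn
  refine ⟨h1, ?_, ?_⟩
  · -- forward direction
    intro hk
    have hkT : T.card = n := by rw [← hcard]; exact hk
    have hm0 : Order.height m₀ = 0 := by
      have h2 : Order.height m₀ + (n : ℕ∞) ≤ 0 + (n : ℕ∞) := by
        rw [zero_add]
        rw [hkT] at hM4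
        exact hM4.trans hjle
      exact nonpos_iff_eq_zero.mp ((WithTop.add_le_add_iff_right (by simp : (n : ℕ∞) ≠ ⊤)).mp h2)
    have hm0b : m₀ = ⊥ := (Order.height_eq_zero.mp hm0).eq_bot
    have hjeq : m₀ ⊔ T.sup id = ⊤ := by
      by_contra h
      have hlt : m₀ ⊔ T.sup id < ⊤ := lt_of_le_of_ne le_top h
      have h3 : Order.height (m₀ ⊔ T.sup id) < (n : ℕ∞) :=
        hht ▸ Order.height_strictMono hlt (my_height_lt_top _)
      have h2 : (n : ℕ∞) ≤ Order.height (m₀ ⊔ T.sup id) := by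
        rw [← hkT]; exact le_trans le_add_self hM4
      exact absurd h2 (not_le.mpr h3)
    have hsup : T.sup id = ⊤ := by rwa [hm0b, bot_sup_eq] at hjeq
    refine ⟨?_, ?_⟩
    · intro a haA
      have haT : a ∈ T := hAfin.mem_toFinset.mpr haA
      have hrec : insert a (T.erase a) = T := Finset.insert_erase haT
      have hM5 := height_jset_ge' hjoin hmeet hdist hm₀ haA (T.erase a)
        (fun x hx => hTA (Finset.erase_subset a T hx)) (Finset.notMem_erase a T)
      rw [hrec, hjeq, hht] at hM5
      have hn1 : 1 ≤ n := by
        rw [← hkT]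
        exact Finset.card_pos.mpr ⟨a, haT⟩
      have hc : (T.erase a).card = n - 1 := by rw [Finset.card_erase_of_mem haT, hkT]
      have hha : Order.height a ≤ 1 := by
        rw [hc] at hM5
        have hn' : ((n - 1 : ℕ) : ℕ∞) + 1 = (n : ℕ∞) := by
          exact_mod_cast congrArg (Nat.cast : ℕ → ℕ∞) (Nat.succ_pred_eq_of_pos hn1)
        rw [← hn', ← add_comm (1 : ℕ∞) ((n - 1 : ℕ) : ℕ∞)] at hM5
        exact (WithTop.add_le_add_iff_right (by simp : ((n - 1 : ℕ) : ℕ∞) ≠ ⊤)).mp hM5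
      constructor
      · exact ne_bot_of_gt (hm0b ▸ haA.2.1)
      · intro b hb
        have h4 : Order.height b + 1 ≤ Order.height a :=
          (ENat.add_one_le_iff (my_height_lt_top _).ne).mpr
            (Order.height_strictMono hb (my_height_lt_top _))
        have hb0 : Order.height b = 0 := by
          have h5 : Order.height b + 1 ≤ 0 + 1 := by rw [zero_add]; exact h4.trans hha
          exact nonpos_iff_eq_zero.mp ((WithTop.add_le_add_iff_right (by simp : (1 : ℕ∞) ≠ ⊤)).mp h5)
        exact (Order.height_eq_zero.mp hb0).eq_bot
    · constructor
      · intro a _; exact le_top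
      · intro b hb
        calc (⊤ : α) = T.sup id := hsup.symm
          _ ≤ b := Finset.sup_le fun x hx => hb (hAfin.mem_toFinset.mp hx)
  · -- backward direction
    rintro ⟨hatoms, hlub⟩
    have hub : T.sup id ∈ upperBounds A := fun x hx =>
      Finset.le_sup (f := id) (hAfin.mem_toFinset.mpr hx)
    have hsup : T.sup id = ⊤ := le_antisymm le_top (hlub.2 hub)
    have hD := height_finset_sup_atoms_le T
      (fun a haT => hatoms a (hAfin.mem_toFinset.mp haT))
    rw [hsup, hht] at hD
    have h2 : n ≤ T.card := by exact_mod_cast hD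
    have h3 : T.card ≤ n := by exact_mod_cast hkn
    rw [hcard]
    omega
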